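/- Let N ≥ 1 and let ρ be a separable state on ℋ_A ⊗ ℋ_B. Then there exists an operator σ ∈ 𝒮̃^N with tr σ = 1 such that ‖ρ − σ‖_∞ ≤ (d−1)/(N+d). (Concretely, σ = (N/(N+d)) ρ + (1/(N+d)) ρ_A ⊗ 𝕀_B works, where ρ_A = tr_B ρ.) -/

import Mathlib

open Matrix MeasureTheory
open scoped Kronecker BigOperators ENNReal ComplexOrder

noncomputable section

namespace SepPaper

/-- The rank-one operator `|ψ⟩⟨ψ|`. -/
def proj {n : Type*} (ψ : n → ℂ) : Matrix n n ℂ := Matrix.vecMulVec ψ (star ψ)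

/-- `Λ` is a separable operator on `ℂ^{dA} ⊗ ℂ^{d}`: a finite conical combination of
pure product operators `|ψ⟩⟨ψ| ⊗ |φ⟩⟨φ|`. -/
def IsSeparable (dA d : ℕ) (Λ : Matrix (Fin dA × Fin d) (Fin dA × Fin d) ℂ) : Prop :=
  ∃ (k : ℕ) (c : Fin k → ℝ) (ψ : Fin k → (Fin dA → ℂ)) (φ : Fin k → (Fin d → ℂ)),
    (∀ i, 0 ≤ c i) ∧
    Λ = ∑ i, (c i : ℂ) • (proj (ψ i) ⊗ₖ proj (φ i))

/-- Partial trace over the `B` system. -/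
def trB {dA d : ℕ} (M : Matrix (Fin dA × Fin d) (Fin dA × Fin d) ℂ) :
    Matrix (Fin dA) (Fin dA) ℂ :=
  fun a a' => ∑ b : Fin d, M (a, b) (a', b)

/-- Index type of `ℋ_A ⊗ ℋ_B ⊗ ℋ_B^{⊗(N-1)} = ℋ_A ⊗ ℋ_B^{⊗N}` (for `N ≥ 1`). -/
abbrev ExtIdx (dA d N : ℕ) := Fin dA × Fin d × (Fin (N - 1) → Fin d)

/-- The orthogonal projector onto the symmetric subspace of `(ℂ^d)^{⊗N}`,
realized as the average of all permutation operators. -/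
def symProj (d N : ℕ) : Matrix (Fin N → Fin d) (Fin N → Fin d) ℂ :=
  (N.factorial : ℂ)⁻¹ •
    ∑ π : Equiv.Perm (Fin N), Matrix.of (fun f g => if (fun i => g (π i)) = f then (1 : ℂ) else 0)

/-- Identification of `ℂ^d ⊗ (ℂ^d)^{⊗(N-1)}` with `(ℂ^d)^{⊗((N-1)+1)}`. -/
def bEquiv (d N : ℕ) : (Fin d × (Fin (N - 1) → Fin d)) ≃ (Fin (N - 1 + 1) → Fin d) :=
  Fin.consEquiv (fun _ => Fin d)

/-- The symmetric projector on the `N = (N-1)+1` copies of `ℂ^d`,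
viewed on the index type `Fin d × (Fin (N-1) → Fin d)`. -/
def symProjB (d N : ℕ) : Matrix (Fin d × (Fin (N - 1) → Fin d)) (Fin d × (Fin (N - 1) → Fin d)) ℂ :=
  Matrix.reindex (bEquiv d N).symm (bEquiv d N).symm (symProj d (N - 1 + 1))

/-- Partial trace over the last `N-1` copies of `ℋ_B`. -/
def ptraceExt {dA d N : ℕ} (M : Matrix (ExtIdx dA d N) (ExtIdx dA d N) ℂ) :
    Matrix (Fin dA × Fin d) (Fin dA × Fin d) ℂ :=
  fun p q => ∑ g : Fin (N - 1) → Fin d, M (p.1, p.2, g) (q.1, q.2, g)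

/-- Membership in `𝒮^N`: existence of a positive semidefinite Bose-symmetric
`N`-extension. -/
def MemSN (dA d N : ℕ) (Λ : Matrix (Fin dA × Fin d) (Fin dA × Fin d) ℂ) : Prop :=
  ∃ Λext : Matrix (ExtIdx dA d N) (ExtIdx dA d N) ℂ,
    Λext.PosSemidef ∧ ptraceExt Λext = Λ ∧
    Λext * ((1 : Matrix (Fin dA) (Fin dA) ℂ) ⊗ₖ symProjB d N) = Λext

/-- Partial transpose of an operator on `ℋ_A ⊗ ℋ_B^{⊗N}` w.r.t. the bipartition
`(A and the first ⌈N/2⌉ copies of B) | (the last ⌊N/2⌋ copies of B)`.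
Copy `0` of `B` is the explicit factor and the extra copy `i : Fin (N-1)` is copy
`i+1`; copy `j` is transposed iff `⌈N/2⌉ = (N+1)/2 ≤ j`. -/
def pt {dA d N : ℕ} (M : Matrix (ExtIdx dA d N) (ExtIdx dA d N) ℂ) :
    Matrix (ExtIdx dA d N) (ExtIdx dA d N) ℂ :=
  fun p q =>
    M (p.1, p.2.1, fun i => if (N + 1) / 2 ≤ (i : ℕ) + 1 then q.2.2 i else p.2.2 i)
      (q.1, q.2.1, fun i => if (N + 1) / 2 ≤ (i : ℕ) + 1 then p.2.2 i else q.2.2 i)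

/-- Membership in `𝒮_p^N`: existence of a positive semidefinite Bose-symmetric
`N`-extension which is moreover PPT w.r.t. the bipartition
`A B^{⌈N/2⌉} | B^{⌊N/2⌋}`. -/
def MemSNp (dA d N : ℕ) (Λ : Matrix (Fin dA × Fin d) (Fin dA × Fin d) ℂ) : Prop :=
  ∃ Λext : Matrix (ExtIdx dA d N) (ExtIdx dA d N) ℂ,
    Λext.PosSemidef ∧ ptraceExt Λext = Λ ∧
    Λext * ((1 : Matrix (Fin dA) (Fin dA) ℂ) ⊗ₖ symProjB d N) = Λext ∧
    (pt Λext).PosSemidef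

/-- Membership in `𝒮̃^N = {(N/(N+d)) σ + (1/(N+d)) σ_A ⊗ 𝕀_B : σ ∈ 𝒮^N}`. -/
def MemStildeN (dA d N : ℕ) (Λ : Matrix (Fin dA × Fin d) (Fin dA × Fin d) ℂ) : Prop :=
  ∃ σ, MemSN dA d N σ ∧
    Λ = ((N : ℂ) / ((N : ℂ) + d)) • σ +
        (1 / ((N : ℂ) + d)) • (trB σ ⊗ₖ (1 : Matrix (Fin d) (Fin d) ℂ))

/-- The Jacobi polynomial `P_n^{(α,β)}` (for natural parameters `α, β`). -/
def jacobiP (n α β : ℕ) (x : ℝ) : ℝ :=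
  ∑ s ∈ Finset.range (n + 1),
    (Nat.choose (n + α) (n - s) : ℝ) * (Nat.choose (n + β) s : ℝ) *
      ((x - 1) / 2) ^ s * ((x + 1) / 2) ^ (n - s)

/-- `ε_N = (d/(2(d-1))) · min {1 - x : P_{⌊N/2⌋+1}^{(d-2, N mod 2)}(x) = 0}`. -/
def epsN (d N : ℕ) : ℝ :=
  ((d : ℝ) / (2 * ((d : ℝ) - 1))) *
    sInf {y : ℝ | ∃ x : ℝ, y = 1 - x ∧ jacobiP (N / 2 + 1) (d - 2) (N % 2) x = 0}

/-- Membership in `𝒮̃_p^N = {(1-ε_N) σ + ε_N σ_A ⊗ 𝕀_B/d : σ ∈ 𝒮_p^N}`. -/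
def MemStildeNp (dA d N : ℕ) (Λ : Matrix (Fin dA × Fin d) (Fin dA × Fin d) ℂ) : Prop :=
  ∃ σ, MemSNp dA d N σ ∧
    Λ = ((1 : ℂ) - (epsN d N : ℂ)) • σ +
        ((epsN d N : ℂ) / d) • (trB σ ⊗ₖ (1 : Matrix (Fin d) (Fin d) ℂ))

/-- The trace norm `‖Z‖₁ = tr √(Z Zᴴ)`. -/
def traceNorm {n : Type*} [Fintype n] [DecidableEq n] (Z : Matrix n n ℂ) : ℝ :=
  (((Matrix.posSemidef_self_mul_conjTranspose Z).1.eigenvectorUnitary : Matrix n n ℂ) *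
      Matrix.diagonal (fun i => ((Real.sqrt ((Matrix.posSemidef_self_mul_conjTranspose Z).1.eigenvalues i) : ℝ) : ℂ)) *
      (star (Matrix.posSemidef_self_mul_conjTranspose Z).1.eigenvectorUnitary : Matrix n n ℂ)).trace.re

/-- The operator norm `‖Z‖_∞` (largest singular value), as the norm of the induced
operator on Euclidean space. -/
def opNorm {n : Type*} [Fintype n] [DecidableEq n] (Z : Matrix n n ℂ) : ℝ :=
  ‖LinearMap.toContinuousLinearMap (Matrix.toEuclideanLin Z)‖

/-- `(|φ⟩⟨φ|)^{⊗N}` on `ℋ_B^{⊗N} = ℋ_B ⊗ ℋ_B^{⊗(N-1)}`. -/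
def projPowExt {d : ℕ} (N : ℕ) (φ : Fin d → ℂ) :
    Matrix (Fin d × (Fin (N - 1) → Fin d)) (Fin d × (Fin (N - 1) → Fin d)) ℂ :=
  fun p q => proj φ p.1 q.1 * ∏ i, proj φ (p.2 i) (q.2 i)

/-- The optimal fidelity `F = sup {tr(ρ Λ) : Λ ∈ 𝒮, tr_B Λ = 𝕀_A}`. -/
def fid (dA d : ℕ) (ρ : Matrix (Fin dA × Fin d) (Fin dA × Fin d) ℂ) : ℝ :=
  sSup {r : ℝ | ∃ Λ, IsSeparable dA d Λ ∧ trB Λ = 1 ∧ r = ((ρ * Λ).trace).re}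

/-- `F̃^N = sup {tr(ρ Λ) : Λ ∈ 𝒮̃^N, tr_B Λ = 𝕀_A}`. -/
def fidTildeN (dA d N : ℕ) (ρ : Matrix (Fin dA × Fin d) (Fin dA × Fin d) ℂ) : ℝ :=
  sSup {r : ℝ | ∃ Λ, MemStildeN dA d N Λ ∧ trB Λ = 1 ∧ r = ((ρ * Λ).trace).re}

/-- `F̃_p^N = sup {tr(ρ Λ) : Λ ∈ 𝒮̃_p^N, tr_B Λ = 𝕀_A}`. -/
def fidTildeNp (dA d N : ℕ) (ρ : Matrix (Fin dA × Fin d) (Fin dA × Fin d) ℂ) : ℝ :=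
  sSup {r : ℝ | ∃ Λ, MemStildeNp dA d N Λ ∧ trB Λ = 1 ∧ r = ((ρ * Λ).trace).re}

/-- Robustness relative to a set `T` of operators:
`R_T(ρ) = inf {tr σ : σ ∈ T, ρ + σ ∈ T}` (with `inf ∅ = +∞`). -/
def rob {dA d : ℕ} (T : Set (Matrix (Fin dA × Fin d) (Fin dA × Fin d) ℂ))
    (ρ : Matrix (Fin dA × Fin d) (Fin dA × Fin d) ℂ) : ℝ≥0∞ :=
  sInf {t : ℝ≥0∞ | ∃ σ ∈ T, ρ + σ ∈ T ∧ t = ENNReal.ofReal ((σ.trace).re)}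



set_option linter.unusedSectionVars false
set_option linter.unusedVariables false
set_option maxHeartbeats 1600000

section Aux
variable {n m : Type*} [Fintype n] [DecidableEq n] [Fintype m] [DecidableEq m]

def nsq {n : Type*} [Fintype n] (v : n → ℂ) : ℝ := ∑ i, Complex.normSq (v i)

lemma nsq_nonneg (v : n → ℂ) : 0 ≤ nsq v := Finset.sum_nonneg fun i _ => Complex.normSq_nonneg _

lemma dotProduct_star_self (v : n → ℂ) : dotProduct (star v) v = ((nsq v : ℝ) : ℂ) := by
  simp only [dotProduct, Pi.star_apply, nsq, Complex.ofReal_sum]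
  exact Finset.sum_congr rfl fun i _ => by
    rw [RCLike.star_def, mul_comm, Complex.mul_conj]

lemma proj_isHermitian (ψ : n → ℂ) : (proj ψ).IsHermitian := by
  ext i j
  simp [proj, Matrix.conjTranspose_apply, Matrix.vecMulVec_apply, mul_comm]

lemma dotProduct_proj (ψ x : n → ℂ) :
    dotProduct (star x) ((proj ψ) *ᵥ x) =
      star (dotProduct (star ψ) x) * (dotProduct (star ψ) x) := by
  simp only [dotProduct, Matrix.mulVec, dotProduct, proj,
    Matrix.vecMulVec_apply, Pi.star_apply, star_sum, star_mul', star_star,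
    Finset.mul_sum, Finset.sum_mul]
  rw [Finset.sum_comm]
  exact Finset.sum_congr rfl fun i _ => Finset.sum_congr rfl fun j _ => by ring

lemma proj_posSemidef (ψ : n → ℂ) : (proj ψ).PosSemidef := by
  refine Matrix.PosSemidef.of_dotProduct_mulVec_nonneg (proj_isHermitian ψ) fun x => ?_
  rw [dotProduct_proj]
  exact star_mul_self_nonneg _

lemma posSemidef_real_smul {A : Matrix n n ℂ} {c : ℝ} (hA : A.PosSemidef) (hc : 0 ≤ c) :
    (((c : ℝ) : ℂ) • A).PosSemidef := by
  refine Matrix.PosSemidef.of_dotProduct_mulVec_nonneg ?_ fun x => ?_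
  · unfold Matrix.IsHermitian
    rw [Matrix.conjTranspose_smul, hA.1]
    congr 1
    simp [Complex.conj_ofReal]
  · rw [Matrix.smul_mulVec, dotProduct_smul, smul_eq_mul]
    exact mul_nonneg (Complex.zero_le_real.mpr hc) (hA.dotProduct_mulVec_nonneg x)

lemma posSemidef_sum {k : Type*} [Fintype k] (f : k → Matrix n n ℂ)
    (h : ∀ i, (f i).PosSemidef) : (∑ i, f i).PosSemidef := by
  classical
  refine Finset.sum_induction f _ (fun a b ha hb => ha.add hb) Matrix.PosSemidef.zero
    fun i _ => h i

lemma kron_conjTranspose (A : Matrix n n ℂ) (B : Matrix m m ℂ) :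
    (A ⊗ₖ B)ᴴ = Aᴴ ⊗ₖ Bᴴ := by
  ext ⟨i,j⟩ ⟨k,l⟩
  simp [Matrix.conjTranspose_apply, Matrix.kroneckerMap_apply, star_mul', mul_comm]

lemma posSemidef_kron {A : Matrix n n ℂ} {B : Matrix m m ℂ}
    (hA : A.PosSemidef) (hB : B.PosSemidef) : (A ⊗ₖ B).PosSemidef := by
  exact hA.kronecker hB

lemma cauchy_schwarz_nsq (ψ x : n → ℂ) :
    Complex.normSq (dotProduct (star ψ) x) ≤ nsq ψ * nsq x := by
  have h := norm_inner_le_norm (𝕜 := ℂ)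
    ((WithLp.equiv 2 (n → ℂ)).symm ψ) ((WithLp.equiv 2 (n → ℂ)).symm x)
  rw [show inner ℂ ((WithLp.equiv 2 (n → ℂ)).symm ψ) ((WithLp.equiv 2 (n → ℂ)).symm x)
      = dotProduct (star ψ) x from by rw [dotProduct_comm]; rfl] at h
  have h2 : ‖dotProduct (star ψ) x‖ ^ 2 ≤
      (‖(WithLp.equiv 2 (n → ℂ)).symm ψ‖ * ‖(WithLp.equiv 2 (n → ℂ)).symm x‖) ^ 2 :=
    pow_le_pow_left₀ (norm_nonneg _) h 2
  have hψ : ‖(WithLp.equiv 2 (n → ℂ)).symm ψ‖ ^ 2 = nsq ψ := by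
    rw [EuclideanSpace.norm_eq, Real.sq_sqrt (Finset.sum_nonneg fun i _ => sq_nonneg _)]
    simp [nsq, Complex.sq_norm]
  have hx : ‖(WithLp.equiv 2 (n → ℂ)).symm x‖ ^ 2 = nsq x := by
    rw [EuclideanSpace.norm_eq, Real.sq_sqrt (Finset.sum_nonneg fun i _ => sq_nonneg _)]
    simp [nsq, Complex.sq_norm]
  calc Complex.normSq (dotProduct (star ψ) x)
      = ‖dotProduct (star ψ) x‖ ^ 2 := by
        rw [Complex.sq_norm]
    _ ≤ _ := h2
    _ = nsq ψ * nsq x := by rw [mul_pow, hψ, hx]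

lemma psd_nsq_one_sub_proj (φ : n → ℂ) :
    (((nsq φ : ℝ) : ℂ) • 1 - proj φ).PosSemidef := by
  refine Matrix.PosSemidef.of_dotProduct_mulVec_nonneg ?_ fun x => ?_
  · unfold Matrix.IsHermitian
    rw [Matrix.conjTranspose_sub, Matrix.conjTranspose_smul, Matrix.conjTranspose_one,
      (proj_isHermitian φ).eq]
    congr 1
    simp [Complex.conj_ofReal]
  · rw [Matrix.sub_mulVec, dotProduct_sub, Matrix.smul_mulVec,
      Matrix.one_mulVec, dotProduct_smul, smul_eq_mul, dotProduct_star_self,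
      dotProduct_proj]
    set t := dotProduct (star φ) x
    have : star t * t = ((Complex.normSq t : ℝ) : ℂ) := by
      rw [RCLike.star_def, mul_comm, Complex.mul_conj]
    rw [this, ← Complex.ofReal_mul, ← Complex.ofReal_sub, ← sub_nonneg] at *
    rw [sub_zero]
    exact Complex.zero_le_real.mpr (by nlinarith [cauchy_schwarz_nsq φ x])

lemma nsq_eq_sum_norm_sq (v : n → ℂ) : nsq v = ∑ i, ‖v i‖ ^ 2 := by
  simp [nsq, Complex.sq_norm]

lemma opNorm_zero : opNorm (0 : Matrix n n ℂ) = 0 := by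
  unfold opNorm; rw [map_zero, map_zero, norm_zero]

lemma opNorm_real_smul (r : ℝ) (M : Matrix n n ℂ) : opNorm ((r : ℂ) • M) = |r| * opNorm M := by
  unfold opNorm
  rw [_root_.map_smul, _root_.map_smul]
  rw [norm_smul ((r : ℂ)) (LinearMap.toContinuousLinearMap (Matrix.toEuclideanLin M))]
  congr 1
  simp [Complex.norm_real]

lemma opNorm_le_of_psd {Z : Matrix n n ℂ} {c : ℝ} (hc : 0 ≤ c) (hZ : Z.IsHermitian)
    (h1 : (((c : ℝ) : ℂ) • 1 - Z).PosSemidef) (h2 : (Z + ((c : ℝ) : ℂ) • 1).PosSemidef) :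
    opNorm Z ≤ c := by
  classical
  -- eigenvalue bounds
  have heig : ∀ i, |hZ.eigenvalues i| ≤ c := by
    intro i
    set v := ⇑(hZ.eigenvectorBasis i) with hv
    have hvv : dotProduct (star v) v = 1 := by
      have hn : ‖hZ.eigenvectorBasis i‖ = 1 := hZ.eigenvectorBasis.orthonormal.1 i
      have : (inner ℂ (hZ.eigenvectorBasis i) (hZ.eigenvectorBasis i) : ℂ) = 1 := by
        rw [inner_self_eq_norm_sq_to_K, hn]; norm_num
      rw [EuclideanSpace.inner_eq_star_dotProduct, dotProduct_comm] at this
      exact this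
    have hZv : Z *ᵥ v = ((hZ.eigenvalues i : ℝ) : ℂ) • v := by
      have h0 := hZ.mulVec_eigenvectorBasis i
      rw [hv, h0]
      ext j
      simp only [Pi.smul_apply, Complex.real_smul, smul_eq_mul]
    have hup := h1.dotProduct_mulVec_nonneg v
    rw [Matrix.sub_mulVec, Matrix.smul_mulVec, Matrix.one_mulVec, hZv,
      dotProduct_sub, dotProduct_smul, dotProduct_smul, hvv,
      smul_eq_mul, smul_eq_mul, mul_one, mul_one, ← Complex.ofReal_sub] at hup
    have hlo := h2.dotProduct_mulVec_nonneg v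
    rw [Matrix.add_mulVec, Matrix.smul_mulVec, Matrix.one_mulVec, hZv,
      dotProduct_add, dotProduct_smul, dotProduct_smul, hvv,
      smul_eq_mul, smul_eq_mul, mul_one, mul_one, ← Complex.ofReal_add] at hlo
    rw [Complex.zero_le_real] at hup hlo
    rw [abs_le]; constructor <;> linarith
  set U : Matrix n n ℂ := ↑(hZ.eigenvectorUnitary) with hUdef
  set D : Matrix n n ℂ := Matrix.diagonal (RCLike.ofReal ∘ hZ.eigenvalues) with hDdef
  have hUU : U * star U = 1 := Matrix.mem_unitaryGroup_iff.mp hZ.eigenvectorUnitary.2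
  have hUU' : star U * U = 1 := Matrix.mem_unitaryGroup_iff'.mp hZ.eigenvectorUnitary.2
  have hZUD : Z = U * D * star U := hZ.spectral_theorem
  have hZmm : Z * Z = U * (D * D) * star U := by
    conv_lhs => rw [hZUD]
    simp only [Matrix.mul_assoc]
    rw [← Matrix.mul_assoc (star U) U (D * star U), hUU', one_mul]
  have key : ((c ^ 2 : ℝ) : ℂ) • 1 - Z * Z
      = U * (((c ^ 2 : ℝ) : ℂ) • (1 : Matrix n n ℂ) - D * D) * star U := by
    have h3 : U * (((c ^ 2 : ℝ) : ℂ) • (1 : Matrix n n ℂ) - D * D) * star U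
        = ((c ^ 2 : ℝ) : ℂ) • (U * star U) - U * (D * D) * star U := by
      rw [Matrix.mul_sub, Matrix.sub_mul, Matrix.mul_smul, Matrix.smul_mul, mul_one]
    rw [h3, hUU, hZmm]
  have hdiag : (((c ^ 2 : ℝ) : ℂ) • (1 : Matrix n n ℂ) - D * D)
      = Matrix.diagonal (fun i => ((c ^ 2 - hZ.eigenvalues i ^ 2 : ℝ) : ℂ)) := by
    rw [hDdef, Matrix.diagonal_mul_diagonal]
    ext i j
    by_cases h : i = j <;>
      simp [Matrix.diagonal_apply, h, Matrix.one_apply, Matrix.smul_apply] <;> push_cast <;> ring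
  have hQ : (((c ^ 2 : ℝ) : ℂ) • 1 - Z * Z).PosSemidef := by
    have hd : (Matrix.diagonal (fun i => ((c ^ 2 - hZ.eigenvalues i ^ 2 : ℝ) : ℂ))).PosSemidef := by
      refine Matrix.posSemidef_diagonal_iff.mpr fun i => Complex.zero_le_real.mpr ?_
      have habs := abs_le.mp (heig i)
      nlinarith
    rw [key, hdiag, Matrix.star_eq_conjTranspose]
    exact hd.mul_mul_conjTranspose_same U
  -- conclude
  unfold opNorm
  refine ContinuousLinearMap.opNorm_le_bound _ hc fun x => ?_
  set y : n → ℂ := (WithLp.equiv 2 (n → ℂ)) x with hy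
  set w : n → ℂ := Z *ᵥ y with hw
  have hposs := hQ.dotProduct_mulVec_nonneg y
  have hZZy : (Z * Z) *ᵥ y = Z *ᵥ w := by rw [← Matrix.mulVec_mulVec]
  have hdot : dotProduct (star y) (Z *ᵥ w) = dotProduct (star w) w := by
    rw [Matrix.dotProduct_mulVec]
    congr 1
    rw [hw, Matrix.star_mulVec, hZ.eq]
  rw [Matrix.sub_mulVec, Matrix.smul_mulVec, Matrix.one_mulVec, dotProduct_sub,
    dotProduct_smul, hZZy, hdot, dotProduct_star_self, dotProduct_star_self,
    smul_eq_mul, ← Complex.ofReal_mul, ← Complex.ofReal_sub, Complex.zero_le_real,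
    sub_nonneg] at hposs
  have hfx : ‖(LinearMap.toContinuousLinearMap (Matrix.toEuclideanLin Z)) x‖
      = Real.sqrt (nsq w) := by
    rw [LinearMap.coe_toContinuousLinearMap']
    rw [Matrix.toEuclideanLin_apply]
    rw [EuclideanSpace.norm_eq]
    rw [nsq_eq_sum_norm_sq]
    congr 1
  have hx : ‖x‖ = Real.sqrt (nsq y) := by
    rw [EuclideanSpace.norm_eq, nsq_eq_sum_norm_sq]
    congr 1
  rw [hfx, hx]
  calc Real.sqrt (nsq w) ≤ Real.sqrt (c ^ 2 * nsq y) := Real.sqrt_le_sqrt hposs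
    _ = c * Real.sqrt (nsq y) := by
        rw [Real.sqrt_mul (sq_nonneg c), Real.sqrt_sq hc]


end Aux

section Aux3
variable {dA d N : ℕ}

lemma trB_sum {k : Type*} [Fintype k] (f : k → Matrix (Fin dA × Fin d) (Fin dA × Fin d) ℂ) :
    trB (∑ i, f i) = ∑ i, trB (f i) := by
  ext a a'
  simp only [trB, Matrix.sum_apply]
  exact Finset.sum_comm
lemma trB_smul (c : ℂ) (M : Matrix (Fin dA × Fin d) (Fin dA × Fin d) ℂ) :
    trB (c • M) = c • trB M := by
  ext a a'
  simp [trB, Finset.mul_sum]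
lemma trB_kron (A : Matrix (Fin dA) (Fin dA) ℂ) (B : Matrix (Fin d) (Fin d) ℂ) :
    trB (A ⊗ₖ B) = B.trace • A := by
  ext a a'
  simp only [trB, Matrix.kroneckerMap_apply, Matrix.smul_apply, Matrix.trace, Matrix.diag,
    smul_eq_mul]
  rw [← Finset.mul_sum, mul_comm]
lemma trB_trace (M : Matrix (Fin dA × Fin d) (Fin dA × Fin d) ℂ) :
    (trB M).trace = M.trace := by
  simp [trB, Matrix.trace, Matrix.diag, Fintype.sum_prod_type]

lemma trace_proj {n : Type*} [Fintype n] (v : n → ℂ) :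
    (proj v).trace = ((nsq v : ℝ) : ℂ) := by
  simp only [Matrix.trace, Matrix.diag, proj, Matrix.vecMulVec_apply, Pi.star_apply, nsq,
    Complex.ofReal_sum]
  exact Finset.sum_congr rfl fun i _ => Complex.mul_conj (v i)

lemma proj_zero {n : Type*} : proj (0 : n → ℂ) = 0 := by
  ext i j; simp [proj, Matrix.vecMulVec_apply]

lemma proj_real_smul {n : Type*} (r : ℝ) (v : n → ℂ) :
    proj (fun b => (r : ℂ) * v b) = ((r ^ 2 : ℝ) : ℂ) • proj v := by
  ext i j
  simp only [proj, Matrix.vecMulVec_apply, Pi.star_apply, Matrix.smul_apply, star_mul',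
    Complex.conj_ofReal, smul_eq_mul, RCLike.star_def]
  push_cast
  ring

lemma vecMulVec_mul {n : Type*} [Fintype n] (u v : n → ℂ) (M : Matrix n n ℂ) :
    Matrix.vecMulVec u v * M = Matrix.vecMulVec u (v ᵥ* M) := by
  ext i j
  simp [Matrix.mul_apply, Matrix.vecMulVec_apply, Matrix.vecMul, dotProduct,
    Finset.mul_sum, mul_assoc]

lemma sum_prod_fun (m : ℕ) {d : ℕ} (h : Fin d → ℂ) :
    ∑ g : Fin m → Fin d, ∏ j, h (g j) = (∑ x, h x) ^ m := by
  rw [← Fintype.piFinset_univ, Finset.sum_prod_piFinset, Finset.prod_const, Finset.card_univ,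
    Fintype.card_fin]

lemma symProj_fix (m : ℕ) {d : ℕ} (v : Fin d → ℂ) (F : Fin m → Fin d) :
    ∑ f : Fin m → Fin d, (∏ j, star (v (f j))) * symProj d m f F
      = ∏ j, star (v (F j)) := by
  unfold symProj
  simp only [Matrix.smul_apply, Matrix.sum_apply, Matrix.of_apply, smul_eq_mul]
  have step1 : ∀ f : Fin m → Fin d,
      (∏ j, star (v (f j))) * ((m.factorial : ℂ)⁻¹ *
        ∑ π : Equiv.Perm (Fin m), (if (fun i => F (π i)) = f then (1 : ℂ) else 0))
      = (m.factorial : ℂ)⁻¹ * ∑ π : Equiv.Perm (Fin m),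
          (if (fun i => F (π i)) = f then (∏ j, star (v (f j))) else 0) := by
    intro f
    rw [Finset.mul_sum, Finset.mul_sum, Finset.mul_sum]
    refine Finset.sum_congr rfl fun π _ => ?_
    split_ifs <;> ring
  simp only [step1]
  rw [← Finset.mul_sum, Finset.sum_comm]
  have step2 : ∀ π : Equiv.Perm (Fin m),
      (∑ f : Fin m → Fin d, if (fun i => F (π i)) = f then (∏ j, star (v (f j))) else 0)
      = ∏ j, star (v (F (π j))) := by
    intro π
    rw [Finset.sum_ite_eq Finset.univ (fun i => F (π i)) (fun f => ∏ j, star (v (f j)))]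
    simp
  simp only [step2]
  have step3 : ∀ π : Equiv.Perm (Fin m), (∏ j, star (v (F (π j)))) = ∏ j, star (v (F j)) :=
    fun π => Equiv.prod_comp π fun j => star (v (F j))
  simp only [step3]
  rw [Finset.sum_const, Finset.card_univ, Fintype.card_perm, Fintype.card_fin, nsmul_eq_mul,
    ← mul_assoc, inv_mul_cancel₀, one_mul]
  exact_mod_cast Nat.factorial_ne_zero m

lemma symProjB_fix {d N : ℕ} (χ : Fin d → ℂ) (bg : Fin d × (Fin (N - 1) → Fin d)) :
    ∑ p : Fin d × (Fin (N - 1) → Fin d),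
        (star (χ p.1) * ∏ j, star (χ (p.2 j))) * symProjB d N p bg
      = star (χ bg.1) * ∏ j, star (χ (bg.2 j)) := by
  have hwp : ∀ p : Fin d × (Fin (N - 1) → Fin d),
      star (χ p.1) * ∏ j, star (χ (p.2 j))
        = ∏ j, star (χ ((bEquiv d N p) j)) := by
    intro p
    rw [Fin.prod_univ_succ]
    simp [bEquiv, Fin.consEquiv]
  have hS : ∀ p, symProjB d N p bg = symProj d (N - 1 + 1) (bEquiv d N p) (bEquiv d N bg) := by
    intro p
    simp [symProjB, Matrix.reindex_apply, Matrix.submatrix_apply]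
  simp only [hwp, hS]
  rw [Equiv.sum_comp (bEquiv d N)
    (fun f => (∏ j, star (χ (f j))) * symProj d (N - 1 + 1) f (bEquiv d N bg))]
  rw [symProj_fix (N - 1 + 1) χ (bEquiv d N bg)]

lemma starvec_fix {dA d N : ℕ} (u : Fin dA → ℂ) (χ : Fin d → ℂ) :
    (star (fun p : ExtIdx dA d N => u p.1 * (χ p.2.1 * ∏ j, χ (p.2.2 j)))) ᵥ*
        ((1 : Matrix (Fin dA) (Fin dA) ℂ) ⊗ₖ symProjB d N)
      = star (fun p : ExtIdx dA d N => u p.1 * (χ p.2.1 * ∏ j, χ (p.2.2 j))) := by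
  funext q
  obtain ⟨a, bg⟩ := q
  show (∑ p : ExtIdx dA d N, _) = _
  rw [Fintype.sum_prod_type]
  rw [Finset.sum_eq_single a ?h1 ?h2]
  case h1 =>
    intro a' _ hne
    simp [Matrix.vecMul, dotProduct, Matrix.kroneckerMap_apply, Matrix.one_apply, hne]
  case h2 => exact fun h => absurd (Finset.mem_univ a) h
  · -- main term
    simp only [Pi.star_apply, Matrix.kroneckerMap_apply, Matrix.one_apply_eq, one_mul,
      star_mul', star_prod]
    rw [show (∑ x : Fin d × (Fin (N - 1) → Fin d),
        star (u a) * (star (χ x.1) * ∏ j, star (χ (x.2 j))) * symProjB d N x bg)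
        = star (u a) * ∑ x : Fin d × (Fin (N - 1) → Fin d),
            (star (χ x.1) * ∏ j, star (χ (x.2 j))) * symProjB d N x bg from by
      rw [Finset.mul_sum]
      exact Finset.sum_congr rfl fun p _ => by ring]
    rw [symProjB_fix]

lemma proj_mul_symfix {dA d N : ℕ} (u : Fin dA → ℂ) (χ : Fin d → ℂ) :
    proj (fun p : ExtIdx dA d N => u p.1 * (χ p.2.1 * ∏ j, χ (p.2.2 j))) *
        ((1 : Matrix (Fin dA) (Fin dA) ℂ) ⊗ₖ symProjB d N)
      = proj (fun p : ExtIdx dA d N => u p.1 * (χ p.2.1 * ∏ j, χ (p.2.2 j))) := by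
  unfold proj
  rw [vecMulVec_mul, starvec_fix]

end Aux3

section Aux4
variable {dA d N : ℕ}

lemma ptraceExt_sum {k : Type*} [Fintype k] (f : k → Matrix (ExtIdx dA d N) (ExtIdx dA d N) ℂ) :
    ptraceExt (∑ i, f i) = ∑ i, ptraceExt (f i) := by
  ext p q
  simp only [ptraceExt, Matrix.sum_apply]
  exact Finset.sum_comm

lemma ptraceExt_smul (a : ℂ) (M : Matrix (ExtIdx dA d N) (ExtIdx dA d N) ℂ) :
    ptraceExt (a • M) = a • ptraceExt M := by
  ext p q
  simp [ptraceExt, Finset.mul_sum]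

lemma sum_selfmul {n : Type*} [Fintype n] (v : n → ℂ) :
    ∑ x, v x * star (v x) = ((nsq v : ℝ) : ℂ) := by
  simp only [nsq, Complex.ofReal_sum]
  exact Finset.sum_congr rfl fun i _ => Complex.mul_conj (v i)

lemma ptraceExt_proj (ψ0 : Fin dA → ℂ) (χ : Fin d → ℂ) :
    ptraceExt (proj (fun p : ExtIdx dA d N => ψ0 p.1 * (χ p.2.1 * ∏ j, χ (p.2.2 j))))
      = (((nsq χ) ^ (N - 1) : ℝ) : ℂ) • (proj ψ0 ⊗ₖ proj χ) := by
  ext ⟨a, b⟩ ⟨a', b'⟩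
  simp only [ptraceExt, proj, Matrix.vecMulVec_apply, Pi.star_apply, Matrix.smul_apply,
    Matrix.kroneckerMap_apply, smul_eq_mul]
  have hg : ∀ g : Fin (N - 1) → Fin d,
      (ψ0 a * (χ b * ∏ j, χ (g j))) * star (ψ0 a' * (χ b' * ∏ j, χ (g j)))
        = (∏ j, (χ (g j) * star (χ (g j)))) *
            ((ψ0 a * star (ψ0 a')) * (χ b * star (χ b'))) := by
    intro g
    rw [star_mul', star_mul', star_prod, Finset.prod_mul_distrib]
    ring
  simp only [hg]
  rw [← Finset.sum_mul]
  have hkey : (∑ g : Fin (N - 1) → Fin d, ∏ j, (χ (g j) * star (χ (g j))))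
      = (((nsq χ) ^ (N - 1) : ℝ) : ℂ) := by
    rw [sum_prod_fun (N - 1) (fun x => χ x * star (χ x)), sum_selfmul, Complex.ofReal_pow]
  rw [hkey]

lemma memSN_of_separable (dA d N : ℕ)
    (ρ : Matrix (Fin dA × Fin d) (Fin dA × Fin d) ℂ) (h : IsSeparable dA d ρ) :
    MemSN dA d N ρ := by
  classical
  obtain ⟨k, c, ψ, φ, hc, hρ⟩ := h
  set s : Fin k → ℝ := fun i => Real.sqrt (nsq (φ i)) with hs
  set φ' : Fin k → Fin d → ℂ := fun i b => (((s i)⁻¹ : ℝ) : ℂ) * φ i b with hφ'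
  set c' : Fin k → ℝ := fun i => c i * nsq (φ i) with hc'
  have hc'nn : ∀ i, 0 ≤ c' i := fun i => mul_nonneg (hc i) (nsq_nonneg _)
  have hφzero : ∀ i, nsq (φ i) = 0 → φ i = 0 := by
    intro i h0
    funext b
    have := (Finset.sum_eq_zero_iff_of_nonneg
      (fun j _ => Complex.normSq_nonneg (φ i j))).mp h0 b (Finset.mem_univ b)
    exact Complex.normSq_eq_zero.mp this
  have hsmul : ∀ i, s i * s i = nsq (φ i) := fun i => Real.mul_self_sqrt (nsq_nonneg _)
  have hnφ' : ∀ i, nsq (φ i) ≠ 0 → nsq (φ' i) = 1 := by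
    intro i h0
    have hsne : s i ≠ 0 := fun hh => h0 (by rw [← hsmul i, hh, mul_zero])
    have hstep : nsq (φ' i) = ((s i)⁻¹ * (s i)⁻¹) * nsq (φ i) := by
      simp only [hφ', nsq, Complex.normSq_mul, Complex.normSq_ofReal]
      rw [← Finset.mul_sum]
    rw [hstep, ← hsmul i]
    field_simp
  have hterm : ∀ i, (c i : ℂ) • (proj (ψ i) ⊗ₖ proj (φ i))
      = (c' i : ℂ) • (proj (ψ i) ⊗ₖ proj (φ' i)) := by
    intro i
    by_cases h0 : nsq (φ i) = 0
    · have hz := hφzero i h0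
      have hz' : φ' i = 0 := by funext b; simp [hφ', hz]
      rw [hz, hz', proj_zero]
      simp [hc', h0]
    · have hsne : s i ≠ 0 := fun hh => h0 (by rw [← hsmul i, hh, mul_zero])
      have hproj : proj (φ' i) = ((((s i)⁻¹) ^ 2 : ℝ) : ℂ) • proj (φ i) := by
        rw [hφ']
        exact proj_real_smul _ _
      have hsi : (s i)⁻¹ * s i = 1 := inv_mul_cancel₀ hsne
      have hsc : ((c' i * ((s i)⁻¹) ^ 2 : ℝ) : ℂ) = ((c i : ℝ) : ℂ) := by
        rw [Complex.ofReal_inj]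
        simp only [hc']
        rw [← hsmul i]
        calc c i * (s i * s i) * ((s i)⁻¹) ^ 2
            = c i * (((s i)⁻¹ * s i) * ((s i)⁻¹ * s i)) := by ring
          _ = c i := by rw [hsi]; ring
      rw [hproj, Matrix.kronecker_smul, smul_smul, ← Complex.ofReal_mul, hsc]
  have hρ' : ρ = ∑ i, (c' i : ℂ) • (proj (ψ i) ⊗ₖ proj (φ' i)) := by
    rw [hρ]
    exact Finset.sum_congr rfl fun i _ => hterm i
  refine ⟨∑ i, (c' i : ℂ) • proj (fun p : ExtIdx dA d N =>
      ψ i p.1 * (φ' i p.2.1 * ∏ j, φ' i (p.2.2 j))), ?_, ?_, ?_⟩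
  · exact posSemidef_sum _ fun i => posSemidef_real_smul (proj_posSemidef _) (hc'nn i)
  · rw [ptraceExt_sum, hρ']
    refine Finset.sum_congr rfl fun i _ => ?_
    rw [ptraceExt_smul, ptraceExt_proj]
    by_cases h0 : nsq (φ i) = 0
    · have : c' i = 0 := by simp [hc', h0]
      rw [this]
      simp
    · rw [hnφ' i h0, one_pow]
      norm_num
  · rw [Finset.sum_mul]
    refine Finset.sum_congr rfl fun i _ => ?_
    rw [Matrix.smul_mul, proj_mul_symfix]

end Aux4

section Aux5
variable {dA d : ℕ}

lemma sum_kron {k : Type*} [Fintype k] (f : k → Matrix (Fin dA) (Fin dA) ℂ)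
    (B : Matrix (Fin d) (Fin d) ℂ) : (∑ i, f i) ⊗ₖ B = ∑ i, f i ⊗ₖ B := by
  ext ⟨a, b⟩ ⟨a', b'⟩
  simp [Matrix.kroneckerMap_apply, Matrix.sum_apply, Finset.sum_mul]

lemma sub_kron (A B : Matrix (Fin dA) (Fin dA) ℂ) (C : Matrix (Fin d) (Fin d) ℂ) :
    (A - B) ⊗ₖ C = A ⊗ₖ C - B ⊗ₖ C := by
  ext ⟨a, b⟩ ⟨a', b'⟩
  simp [Matrix.kroneckerMap_apply, sub_mul]

lemma sep_psd_facts (ρ : Matrix (Fin dA × Fin d) (Fin dA × Fin d) ℂ)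
    (h : IsSeparable dA d ρ) (htr : ρ.trace = 1) :
    ρ.PosSemidef ∧ (trB ρ ⊗ₖ (1 : Matrix (Fin d) (Fin d) ℂ) - ρ).PosSemidef ∧
      ((1 : Matrix (Fin dA × Fin d) (Fin dA × Fin d) ℂ) -
        trB ρ ⊗ₖ (1 : Matrix (Fin d) (Fin d) ℂ)).PosSemidef := by
  classical
  obtain ⟨k, c, ψ, φ, hc, hρ⟩ := h
  have hpsd : ρ.PosSemidef := by
    rw [hρ]
    exact posSemidef_sum _ fun i => posSemidef_real_smul
      (posSemidef_kron (proj_posSemidef _) (proj_posSemidef _)) (hc i)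
  have htrB : trB ρ = ∑ i, ((c i * nsq (φ i) : ℝ) : ℂ) • proj (ψ i) := by
    rw [hρ, trB_sum]
    refine Finset.sum_congr rfl fun i _ => ?_
    rw [trB_smul, trB_kron, trace_proj, smul_smul, ← Complex.ofReal_mul]
  have hsub : trB ρ ⊗ₖ (1 : Matrix (Fin d) (Fin d) ℂ) - ρ
      = ∑ i, (c i : ℂ) • (proj (ψ i) ⊗ₖ
          (((nsq (φ i) : ℝ) : ℂ) • (1 : Matrix (Fin d) (Fin d) ℂ) - proj (φ i))) := by
    rw [htrB, hρ, sum_kron, ← Finset.sum_sub_distrib]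
    refine Finset.sum_congr rfl fun i _ => ?_
    ext ⟨a, b⟩ ⟨a', b'⟩
    simp only [Matrix.smul_apply, Matrix.sub_apply, Matrix.kroneckerMap_apply, Matrix.one_apply,
      smul_eq_mul, proj, Matrix.vecMulVec_apply, Pi.star_apply]
    split_ifs <;> push_cast <;> ring
  have hsum : (∑ i, ((c i * nsq (φ i) * nsq (ψ i) : ℝ) : ℂ)) = 1 := by
    rw [← htr, hρ, Matrix.trace_sum]
    refine Finset.sum_congr rfl fun i _ => ?_
    rw [Matrix.trace_smul, Matrix.trace_kronecker, trace_proj, trace_proj, smul_eq_mul]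
    push_cast
    ring
  have h1 : (1 : Matrix (Fin dA) (Fin dA) ℂ) - trB ρ
      = ∑ i, ((c i * nsq (φ i) : ℝ) : ℂ) •
          (((nsq (ψ i) : ℝ) : ℂ) • (1 : Matrix (Fin dA) (Fin dA) ℂ) - proj (ψ i)) := by
    have hterm : ∀ i, ((c i * nsq (φ i) : ℝ) : ℂ) •
        (((nsq (ψ i) : ℝ) : ℂ) • (1 : Matrix (Fin dA) (Fin dA) ℂ) - proj (ψ i))
        = ((c i * nsq (φ i) * nsq (ψ i) : ℝ) : ℂ) • (1 : Matrix (Fin dA) (Fin dA) ℂ)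
            - ((c i * nsq (φ i) : ℝ) : ℂ) • proj (ψ i) := by
      intro i
      rw [smul_sub, smul_smul, ← Complex.ofReal_mul]
    rw [Finset.sum_congr rfl fun i _ => hterm i, Finset.sum_sub_distrib, ← Finset.sum_smul,
      hsum, one_smul, htrB]
  have hpos1 : ((1 : Matrix (Fin dA) (Fin dA) ℂ) - trB ρ).PosSemidef := by
    rw [h1]
    exact posSemidef_sum _ fun i => posSemidef_real_smul (psd_nsq_one_sub_proj _)
      (mul_nonneg (hc i) (nsq_nonneg _))
  refine ⟨hpsd, ?_, ?_⟩
  · rw [hsub]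
    exact posSemidef_sum _ fun i => posSemidef_real_smul
      (posSemidef_kron (proj_posSemidef _) (psd_nsq_one_sub_proj _)) (hc i)
  · have heq : (1 : Matrix (Fin dA × Fin d) (Fin dA × Fin d) ℂ) -
        trB ρ ⊗ₖ (1 : Matrix (Fin d) (Fin d) ℂ)
        = ((1 : Matrix (Fin dA) (Fin dA) ℂ) - trB ρ) ⊗ₖ (1 : Matrix (Fin d) (Fin d) ℂ) := by
      rw [sub_kron, Matrix.one_kronecker_one]
    rw [heq]
    exact posSemidef_kron hpos1 Matrix.PosSemidef.one

end Aux5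

/-- every separable state is within operator-norm distance
`(d-1)/(N+d)` of a normalized element of `𝒮̃^N`; concretely
`σ = (N/(N+d)) ρ + (1/(N+d)) ρ_A ⊗ 𝕀_B` works. -/
theorem stmt1 (dA d N : ℕ) (hdA : 1 ≤ dA) (hd : 1 ≤ d) (hN : 1 ≤ N)
    (ρ : Matrix (Fin dA × Fin d) (Fin dA × Fin d) ℂ)
    (hρsep : IsSeparable dA d ρ) (hρtr : ρ.trace = 1) :
    ∃ σ : Matrix (Fin dA × Fin d) (Fin dA × Fin d) ℂ,
      σ = ((N : ℂ) / ((N : ℂ) + d)) • ρ +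
          (1 / ((N : ℂ) + d)) • (trB ρ ⊗ₖ (1 : Matrix (Fin d) (Fin d) ℂ)) ∧
      MemStildeN dA d N σ ∧ σ.trace = 1 ∧
      opNorm (ρ - σ) ≤ ((d : ℝ) - 1) / ((N : ℝ) + d) := by
  classical
  obtain ⟨hpsd, hsubK, h1K⟩ := sep_psd_facts ρ hρsep hρtr
  have hNd : ((N : ℂ) + d) ≠ 0 := by
    have h0 : ((N : ℂ) + d) = ((N + d : ℕ) : ℂ) := by push_cast; ring
    rw [h0]
    exact Nat.cast_ne_zero.mpr (by omega)
  refine ⟨((N : ℂ) / ((N : ℂ) + d)) • ρ +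
      (1 / ((N : ℂ) + d)) • (trB ρ ⊗ₖ (1 : Matrix (Fin d) (Fin d) ℂ)), rfl, ?_, ?_, ?_⟩
  · exact ⟨ρ, memSN_of_separable dA d N ρ hρsep, rfl⟩
  · rw [Matrix.trace_add, Matrix.trace_smul, Matrix.trace_smul, Matrix.trace_kronecker,
      trB_trace, hρtr, Matrix.trace_one]
    simp only [smul_eq_mul, mul_one, Fintype.card_fin]
    field_simp
  · by_cases hd1 : d = 1
    · subst hd1
      have hKρ : trB ρ ⊗ₖ (1 : Matrix (Fin 1) (Fin 1) ℂ) = ρ := by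
        ext ⟨a, b⟩ ⟨a', b'⟩
        have hb : b = b' := Subsingleton.elim b b'
        subst hb
        simp only [Matrix.kroneckerMap_apply, Matrix.one_apply_eq, mul_one, trB]
        rw [Finset.sum_eq_single b (fun x _ hx => absurd (Subsingleton.elim x b) hx)
          (fun hmem => absurd (Finset.mem_univ b) hmem)]
      rw [hKρ]
      have hco : (1 : ℂ) - (N : ℂ) / ((N : ℂ) + 1) - 1 / ((N : ℂ) + 1) = 0 := by
        field_simp; ring
      have hzero : ρ - (((N : ℂ) / ((N : ℂ) + 1)) • ρ + (1 / ((N : ℂ) + 1)) • ρ)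
          = ((1 : ℂ) - (N : ℂ) / ((N : ℂ) + 1) - 1 / ((N : ℂ) + 1)) • ρ := by
        module
      push_cast at hzero hco ⊢
      rw [hzero, hco, zero_smul, opNorm_zero]
      positivity
    · have hd2 : 2 ≤ d := by omega
      have hdR : (2 : ℝ) ≤ (d : ℝ) := by exact_mod_cast hd2
      set cR : ℝ := (d : ℝ) - 1 with hcR
      have hcnn : 0 ≤ cR := by rw [hcR]; linarith
      set K := trB ρ ⊗ₖ (1 : Matrix (Fin d) (Fin d) ℂ) with hK
      set Z := (((d : ℝ) : ℂ)) • ρ - K with hZ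
      have hrhosub : ρ - (((N : ℂ) / ((N : ℂ) + d)) • ρ + (1 / ((N : ℂ) + d)) • K)
          = ((((N : ℝ) + d)⁻¹ : ℝ) : ℂ) • Z := by
        rw [hZ]
        push_cast
        match_scalars <;> field_simp <;> ring
      have hKh : Kᴴ = K := by
        have h3 := hsubK.isHermitian.eq
        rw [Matrix.conjTranspose_sub, hpsd.isHermitian.eq] at h3
        exact sub_left_inj.mp h3
      have hZherm : Z.IsHermitian := by
        show Zᴴ = Z
        rw [hZ, Matrix.conjTranspose_sub, Matrix.conjTranspose_smul, hpsd.isHermitian.eq, hKh]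
        congr 1
        simp [Complex.conj_ofReal]
      have hup : (((cR : ℝ) : ℂ) • 1 - Z).PosSemidef := by
        have heq : ((cR : ℝ) : ℂ) • (1 : Matrix (Fin dA × Fin d) (Fin dA × Fin d) ℂ) - Z
            = (((d : ℝ) : ℂ)) • (K - ρ) + ((cR : ℝ) : ℂ) • (1 - K) := by
          rw [hZ, hcR]
          push_cast
          module
        rw [heq]
        exact (posSemidef_real_smul hsubK (by positivity)).add
          (posSemidef_real_smul h1K hcnn)
      have hlo : (Z + ((cR : ℝ) : ℂ) • 1).PosSemidef := by
        have heq : Z + ((cR : ℝ) : ℂ) • (1 : Matrix (Fin dA × Fin d) (Fin dA × Fin d) ℂ)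
            = (((d : ℝ) : ℂ)) • ρ + (1 - K) + ((((d : ℝ) - 2 : ℝ)) : ℂ) •
                (1 : Matrix (Fin dA × Fin d) (Fin dA × Fin d) ℂ) := by
          rw [hZ, hcR]
          push_cast
          module
        rw [heq]
        exact ((posSemidef_real_smul hpsd (by positivity)).add h1K).add
          (posSemidef_real_smul Matrix.PosSemidef.one (by linarith))
      have hbound := opNorm_le_of_psd hcnn hZherm hup hlo
      rw [hrhosub, opNorm_real_smul, abs_of_nonneg (by positivity : (0:ℝ) ≤ ((N : ℝ) + d)⁻¹)]
      calc ((N : ℝ) + d)⁻¹ * opNorm Z ≤ ((N : ℝ) + d)⁻¹ * cR := by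
            exact mul_le_mul_of_nonneg_left hbound (by positivity)
        _ = ((d : ℝ) - 1) / ((N : ℝ) + d) := by rw [hcR, div_eq_mul_inv, mul_comm]

end SepPaper
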